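/- Let P_0, P_1, ..., P_N be integer-valued random variables with P_0 = 0, and suppose that for each 0 ≤ k < N and all integers i, j: P(P_{k+1} ≥ i + j | P_k = i) ≥ P(X ≥ j), where X has a fixed integer distribution. Then for i.i.d. copies X_1, ..., X_N of X, P(P_N ≥ i) ≥ P(X_1 + ... + X_N ≥ i) for every integer i. -/

import Mathlib

open MeasureTheory ProbabilityTheory

/-- Partition a set according to the value of an integer-valued measurable function. -/
lemma aux_partition {Ω : Type*} [MeasurableSpace Ω] (μ : Measure Ω)
    {f : Ω → ℤ} (hf : Measurable f) {s : Set Ω} (hs : MeasurableSet s) :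
    μ s = ∑' m : ℤ, μ (s ∩ f ⁻¹' {m}) := by
  have hunion : s = ⋃ m : ℤ, s ∩ f ⁻¹' {m} := by
    ext ω; simp
  have hdisj : Pairwise (Function.onFun Disjoint fun m : ℤ => s ∩ f ⁻¹' {m}) := by
    intro m n hmn
    refine Set.disjoint_left.2 fun ω hω hω' => hmn ?_
    have h1 : f ω = m := hω.2
    have h2 : f ω = n := hω'.2
    rw [← h1, ← h2]
  calc μ s = μ (⋃ m : ℤ, s ∩ f ⁻¹' {m}) := by rw [← hunion]
    _ = ∑' m : ℤ, μ (s ∩ f ⁻¹' {m}) :=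
      measure_iUnion hdisj fun m => hs.inter (hf (MeasurableSet.of_discrete))

/-- Tail probability as a sum over values. -/
lemma aux_tail {Ω : Type*} [MeasurableSpace Ω] (μ : Measure Ω)
    {f : Ω → ℤ} (hf : Measurable f) (c : ℤ) :
    μ {ω | c ≤ f ω} = ∑' m : ℤ, if c ≤ m then μ (f ⁻¹' {m}) else 0 := by
  have hs : MeasurableSet {ω | c ≤ f ω} := hf (MeasurableSet.of_discrete (s := {x | c ≤ x}))
  rw [aux_partition μ hf hs]
  refine tsum_congr fun m => ?_
  by_cases h : c ≤ m
  · simp only [h, if_true]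
    congr 1
    ext ω
    simp only [Set.mem_inter_iff, Set.mem_setOf_eq, Set.mem_preimage, Set.mem_singleton_iff]
    exact ⟨fun ⟨_, h2⟩ => h2, fun h1 => ⟨h1 ▸ h, h1⟩⟩
  · simp only [h, if_false]
    convert measure_empty (μ := μ)
    ext ω
    simp only [Set.mem_inter_iff, Set.mem_setOf_eq, Set.mem_preimage, Set.mem_singleton_iff,
      Set.mem_empty_iff_false, iff_false, not_and]
    intro h1 h2
    exact h (h2 ▸ h1)

/-- Key identity: the tail probability of a sum with an independent increment of law ν
can be written as a ν-average of shifted tail probabilities. -/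
lemma aux_swap {Ω : Type*} [MeasurableSpace Ω] (μ : Measure Ω)
    {f : Ω → ℤ} (hf : Measurable f) (ν : Measure ℤ) (i : ℤ) :
    ∑' m : ℤ, μ (f ⁻¹' {m}) * ν {x : ℤ | i - m ≤ x}
      = ∑' j : ℤ, ν {j} * μ {ω | i - j ≤ f ω} := by
  have hν : ∀ m : ℤ, ν {x : ℤ | i - m ≤ x} = ∑' j : ℤ, if i - m ≤ j then ν {j} else 0 := by
    intro m
    rw [← MeasureTheory.Measure.tsum_indicator_apply_singleton ν _ (MeasurableSet.of_discrete (s := {x | i - m ≤ x}))]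
    refine tsum_congr fun j => ?_
    simp [Set.indicator_apply]
  calc ∑' m : ℤ, μ (f ⁻¹' {m}) * ν {x : ℤ | i - m ≤ x}
      = ∑' m : ℤ, ∑' j : ℤ, μ (f ⁻¹' {m}) * (if i - m ≤ j then ν {j} else 0) := by
        refine tsum_congr fun m => ?_
        rw [hν m, ENNReal.tsum_mul_left]
    _ = ∑' j : ℤ, ∑' m : ℤ, μ (f ⁻¹' {m}) * (if i - m ≤ j then ν {j} else 0) :=
        ENNReal.tsum_comm
    _ = ∑' j : ℤ, ∑' m : ℤ, ν {j} * (if i - j ≤ m then μ (f ⁻¹' {m}) else 0) := by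
        refine tsum_congr fun j => tsum_congr fun m => ?_
        have hiff : i - m ≤ j ↔ i - j ≤ m := by omega
        by_cases h : i - j ≤ m
        · simp [h, hiff.2 h, mul_comm]
        · have h2 : ¬ i - m ≤ j := fun hh => h (hiff.1 hh)
          simp [h, h2]
    _ = ∑' j : ℤ, ν {j} * ∑' m : ℤ, (if i - j ≤ m then μ (f ⁻¹' {m}) else 0) :=
        tsum_congr fun j => ENNReal.tsum_mul_left
    _ = ∑' j : ℤ, ν {j} * μ {ω | i - j ≤ f ω} := by
        refine tsum_congr fun j => ?_
        rw [← aux_tail μ hf (i - j)]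

/-- Expansion of the tail probability of an independent sum. -/
lemma aux_sum_expand {Ω : Type*} [MeasurableSpace Ω] (μ : Measure Ω)
    {f g : Ω → ℤ} (hf : Measurable f) (hg : Measurable g)
    (hind : IndepFun f g μ) (i : ℤ) :
    μ {ω | i ≤ f ω + g ω} = ∑' m : ℤ, μ (f ⁻¹' {m}) * (μ.map g) {x : ℤ | i - m ≤ x} := by
  have hs : MeasurableSet {ω | i ≤ f ω + g ω} :=
    (hf.add hg) (MeasurableSet.of_discrete (s := {x | i ≤ x}))
  rw [aux_partition μ hf hs]
  refine tsum_congr fun m => ?_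
  have hset : {ω | i ≤ f ω + g ω} ∩ f ⁻¹' {m} = f ⁻¹' {m} ∩ g ⁻¹' {x : ℤ | i - m ≤ x} := by
    ext ω
    simp only [Set.mem_inter_iff, Set.mem_setOf_eq, Set.mem_preimage, Set.mem_singleton_iff]
    constructor
    · rintro ⟨h1, h2⟩; exact ⟨h2, by omega⟩
    · rintro ⟨h1, h2⟩; exact ⟨by omega, h1⟩
  rw [hset, hind.measure_inter_preimage_eq_mul _ _ MeasurableSet.of_discrete
    MeasurableSet.of_discrete, Measure.map_apply hg MeasurableSet.of_discrete]

/-- If each increment of the integer-valued process (P_k) stochastically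
dominates a fixed distribution ν conditionally on the past value, then P_N stochastically
dominates the sum of N i.i.d. random variables of law ν. -/
theorem process_dominates_iid_sum {Ω : Type*} [MeasurableSpace Ω]
    (μ : Measure Ω) [IsProbabilityMeasure μ]
    (N : ℕ) (P : ℕ → Ω → ℤ) (hPmeas : ∀ k, Measurable (P k))
    (hP0 : ∀ ω, P 0 ω = 0)
    (ν : Measure ℤ) [IsProbabilityMeasure ν]
    (hcond : ∀ k < N, ∀ i j : ℤ,
      ν {x : ℤ | j ≤ x} * μ {ω | P k ω = i} ≤
        μ ({ω | i + j ≤ P (k + 1) ω} ∩ {ω | P k ω = i}))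
    (X : Fin N → Ω → ℤ) (hXmeas : ∀ i, Measurable (X i))
    (hindep : iIndepFun X μ)
    (hlaw : ∀ i, Measure.map (X i) μ = ν) :
    ∀ i : ℤ, μ {ω | i ≤ ∑ k, X k ω} ≤ μ {ω | i ≤ P N ω} := by
  classical
  -- partial sums indexed by a natural number cut-off
  set T : ℕ → Finset (Fin N) := fun k => Finset.univ.filter (fun j : Fin N => (j : ℕ) < k)
    with hT
  set S : ℕ → Ω → ℤ := fun k => ∑ j ∈ T k, X j with hS
  have hSapp : ∀ k ω, S k ω = ∑ j ∈ T k, X j ω := fun k ω => by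
    simp [hS, Finset.sum_apply]
  have hSmeas : ∀ k, Measurable (S k) := by
    intro k
    have hfe : S k = fun ω => ∑ j ∈ T k, X j ω := funext (hSapp k)
    rw [hfe]
    exact Finset.measurable_sum _ fun j _ => hXmeas j
  -- main induction
  have key : ∀ k, k ≤ N → ∀ i : ℤ, μ {ω | i ≤ S k ω} ≤ μ {ω | i ≤ P k ω} := by
    intro k
    induction k with
    | zero =>
      intro _ i
      have h1 : {ω | i ≤ S 0 ω} = {ω | i ≤ (0 : ℤ)} := by
        ext ω; simp [hSapp, hT]
      have h2 : {ω | i ≤ P 0 ω} = {ω | i ≤ (0 : ℤ)} := by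
        ext ω; simp [hP0]
      rw [h1, h2]
    | succ k ih =>
      intro hkN i
      have hk : k < N := Nat.lt_of_succ_le hkN
      have IH := ih (Nat.le_of_lt hk)
      -- split the sum
      have hTsucc : T (k + 1) = insert ⟨k, hk⟩ (T k) := by
        ext j
        simp only [hT, Finset.mem_filter, Finset.mem_univ, true_and, Finset.mem_insert]
        constructor
        · intro h
          rcases Nat.lt_succ_iff_lt_or_eq.1 h with h | h
          · exact Or.inr h
          · exact Or.inl (Fin.ext h)
        · rintro (h | h)
          · rw [h]; exact Nat.lt_succ_self k
          · exact Nat.lt_succ_of_lt h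
      have hnotmem : (⟨k, hk⟩ : Fin N) ∉ T k := by
        simp [hT]
      have hsplit : ∀ ω, S (k + 1) ω = S k ω + X ⟨k, hk⟩ ω := by
        intro ω
        rw [hSapp, hSapp, hTsucc, Finset.sum_insert hnotmem, add_comm]
      have hind : IndepFun (S k) (X ⟨k, hk⟩) μ :=
        hindep.indepFun_finsetSum_of_notMem hXmeas hnotmem
      -- preimage notation conversions
      have hpre : ∀ (f : Ω → ℤ) (m : ℤ), f ⁻¹' {m} = {ω | f ω = m} := by
        intro f m; ext ω; simp
      calc μ {ω | i ≤ S (k + 1) ω}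
          = μ {ω | i ≤ S k ω + X ⟨k, hk⟩ ω} := by
            congr 1; ext ω; rw [Set.mem_setOf_eq, Set.mem_setOf_eq, hsplit]
        _ = ∑' m : ℤ, μ ((S k) ⁻¹' {m}) * (μ.map (X ⟨k, hk⟩)) {x : ℤ | i - m ≤ x} :=
            aux_sum_expand μ (hSmeas k) (hXmeas _) hind i
        _ = ∑' m : ℤ, μ ((S k) ⁻¹' {m}) * ν {x : ℤ | i - m ≤ x} := by
            simp only [hlaw]
        _ = ∑' j : ℤ, ν {j} * μ {ω | i - j ≤ S k ω} := aux_swap μ (hSmeas k) ν i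
        _ ≤ ∑' j : ℤ, ν {j} * μ {ω | i - j ≤ P k ω} :=
            ENNReal.tsum_le_tsum fun j => mul_le_mul_right (IH (i - j)) _
        _ = ∑' m : ℤ, μ ((P k) ⁻¹' {m}) * ν {x : ℤ | i - m ≤ x} :=
            (aux_swap μ (hPmeas k) ν i).symm
        _ ≤ ∑' m : ℤ, μ ({ω | i ≤ P (k + 1) ω} ∩ (P k) ⁻¹' {m}) := by
            refine ENNReal.tsum_le_tsum fun m => ?_
            have := hcond k hk m (i - m)
            rw [hpre]
            calc μ {ω | P k ω = m} * ν {x : ℤ | i - m ≤ x}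
                = ν {x : ℤ | i - m ≤ x} * μ {ω | P k ω = m} := mul_comm _ _
              _ ≤ μ ({ω | m + (i - m) ≤ P (k + 1) ω} ∩ {ω | P k ω = m}) := this
              _ = μ ({ω | i ≤ P (k + 1) ω} ∩ {ω | P k ω = m}) := by
                  congr 2; ext ω; constructor <;> (intro h; simp only [Set.mem_setOf_eq] at *; omega)
        _ = μ {ω | i ≤ P (k + 1) ω} := by
            refine (aux_partition μ (hPmeas k) ?_).symm
            exact (hPmeas (k + 1)) (MeasurableSet.of_discrete (s := {x | i ≤ x}))
  intro i
  have hSN : ∀ ω, S N ω = ∑ k, X k ω := by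
    intro ω
    rw [hSapp]
    refine Finset.sum_congr ?_ fun _ _ => rfl
    ext j; simp [hT, j.isLt]
  have : {ω | i ≤ ∑ k, X k ω} = {ω | i ≤ S N ω} := by
    ext ω; rw [Set.mem_setOf_eq, Set.mem_setOf_eq, hSN]
  rw [this]
  exact key N le_rfl i
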